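/- For each i ∈ {1,2} and each k = 1, …, e, the rational number λ_{ĩ,k} · ∏_{l=0}^{k−1} m_ĩ^{(l)}(i) is an integer, and this integer is relatively prime to m_ĩ^{(k−1)}(i). In other words, λ_{ĩ,k} may be written as a fraction with denominator m_ĩ · m'_ĩ(i) · m_ĩ^{(2)}(i) ⋯ m_ĩ^{(k−1)}(i) and with numerator relatively prime to m_ĩ^{(k−1)}(i). -/

import Mathlib

/-- The data of a reduced irreducible quasi-ordinary prototype surface branch
`ζ = Σ_{j=1}^e x₁^{λ_{1,j}} x₂^{λ_{2,j}}` together with, for each choice `i ∈ {1,2}`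
of the recursion, the derived exponent sequences `λ^{(k)}_{u,j}(i)`, the lowest-terms
representations `λ^{(k)}_{u,1}(i) = n_u^{(k)}(i) / m_u^{(k)}(i)` of the leading
exponents, and the minimal nonnegative integers `r_i^{(k)}, s_i^{(k)}` with
`m_ĩ^{(k)}(i)·s_i^{(k)} − n_ĩ^{(k)}(i)·r_i^{(k)} = 1`.

The `Bool` index `false` corresponds to the index `1` of the paper and `true` to `2`;
for an index `i`, the other index `ĩ` is `!i`. -/
structure QOData where
  /-- the number `e ≥ 1` of characteristic terms -/
  e : ℕ
  he : 1 ≤ e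
  /-- the characteristic exponents `λ_{u,j}` for `u ∈ {1,2}`, `j = 1,…,e` -/
  lam0 : Bool → ℕ → ℚ
  /-- the derived exponents `λ^{(k)}_{u,j}(i)`; the arguments are, in order, `i u k j`,
  with `k = 0,…,e−1` and `j = 1,…,e−k` -/
  lam : Bool → Bool → ℕ → ℕ → ℚ
  /-- the numerators `n_u^{(k)}(i)`; the arguments are, in order, `i u k` -/
  n : Bool → Bool → ℕ → ℤ
  /-- the denominators `m_u^{(k)}(i) ≥ 1`; the arguments are, in order, `i u k` -/
  m : Bool → Bool → ℕ → ℕ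
  /-- `r_i^{(k)}`; the arguments are, in order, `i k` -/
  r : Bool → ℕ → ℕ
  /-- `s_i^{(k)}`; the arguments are, in order, `i k` -/
  s : Bool → ℕ → ℕ
  /-- the leading exponents are positive -/
  pos : ∀ u, 0 < lam0 u 1
  /-- the exponents are nondecreasing in `j` -/
  mono : ∀ u j, 1 ≤ j → j < e → lam0 u j ≤ lam0 u (j + 1)
  /-- each characteristic pair is essential: it does not lie in the subgroup of `ℚ²`
  generated by `ℤ²` together with the earlier pairs -/
  essential : ∀ j, 1 ≤ j → j ≤ e →
    (lam0 false j, lam0 true j) ∉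
      AddSubgroup.closure
        ((Set.range fun p : ℤ × ℤ => ((p.1 : ℚ), (p.2 : ℚ))) ∪
          {q : ℚ × ℚ | ∃ l, 1 ≤ l ∧ l < j ∧ q = (lam0 false l, lam0 true l)})
  /-- `λ^{(0)}_{u,j}(i) = λ_{u,j}` -/
  base : ∀ i u j, lam i u 0 j = lam0 u j
  /-- the denominators are at least 1 -/
  m_pos : ∀ i u k, k ≤ e - 1 → 1 ≤ m i u k
  /-- the leading exponents are written in lowest terms -/
  cop : ∀ i u k, k ≤ e - 1 → Int.gcd (n i u k) (m i u k : ℤ) = 1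
  /-- `λ^{(k)}_{u,1}(i) = n_u^{(k)}(i) / m_u^{(k)}(i)` -/
  lead : ∀ i u k, k ≤ e - 1 → lam i u k 1 = (n i u k : ℚ) / (m i u k : ℚ)
  /-- `m_ĩ^{(k)}(i)·s_i^{(k)} − n_ĩ^{(k)}(i)·r_i^{(k)} = 1` -/
  rs_det : ∀ i k, k ≤ e - 1 →
    (m i (!i) k : ℤ) * (s i k : ℤ) - n i (!i) k * (r i k : ℤ) = 1
  /-- `r_i^{(k)}` and `s_i^{(k)}` are the smallest nonnegative integers satisfying
  the determinant condition -/
  rs_min : ∀ i k, k ≤ e - 1 → ∀ r' s' : ℕ,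
    (m i (!i) k : ℤ) * (s' : ℤ) - n i (!i) k * (r' : ℤ) = 1 → r i k ≤ r' ∧ s i k ≤ s'
  /-- the recursion for `λ^{(k+1)}_{ĩ,j}(i)`, where `d_•^{(k)}(i) = lcm(m₁^{(k)}(i), m₂^{(k)}(i))` -/
  rec_other : ∀ i k j, k + 1 ≤ e - 1 → 1 ≤ j → j ≤ e - (k + 1) →
    lam i (!i) (k + 1) j =
      (m i (!i) k : ℚ) *
        (lam i (!i) k (j + 1) - lam i (!i) k 1 +
          (Nat.lcm (m i false k) (m i true k) : ℚ) * lam i (!i) k 1)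
  /-- the recursion for `λ^{(k+1)}_{i,j}(i)`, where
  `b_i^{(k)} = d_•^{(k)}(i) / m_ĩ^{(k)}(i)` -/
  rec_self : ∀ i k j, k + 1 ≤ e - 1 → 1 ≤ j → j ≤ e - (k + 1) →
    lam i i (k + 1) j =
      ((Nat.lcm (m i false k) (m i true k) / m i (!i) k : ℕ) : ℚ) *
        (lam i i k (j + 1) - lam i i k 1 +
          (Nat.lcm (m i false k) (m i true k) : ℚ) * lam i i k 1) +
      ((Nat.lcm (m i false k) (m i true k) / m i (!i) k : ℕ) : ℚ) * (r i k : ℚ) *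
        lam i i k 1 * lam i (!i) (k + 1) j

namespace QOData

variable (D : QOData)

/-- `d_•^{(k)}(i) = lcm(m₁^{(k)}(i), m₂^{(k)}(i))` -/
def dd (i : Bool) (k : ℕ) : ℕ := Nat.lcm (D.m i false k) (D.m i true k)

/-- `b_i^{(k)} = d_•^{(k)}(i) / m_ĩ^{(k)}(i)` -/
def b (i : Bool) (k : ℕ) : ℕ := D.dd i k / D.m i (!i) k

/-- `c_•^{(k)}(i) = gcd(n₁^{(k)}(i), n₂^{(k)}(i))` -/
def c (i : Bool) (k : ℕ) : ℕ := Int.gcd (D.n i false k) (D.n i true k)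

/-- `d^{(k)}(i) = ∏_{l=k}^{e−1} d_•^{(l)}(i)`, the degree of the `k`-th derived surface -/
def dTot (i : Bool) (k : ℕ) : ℕ := ∏ l ∈ Finset.Ico k D.e, D.dd i l

end QOData


private lemma QOData.key (D : QOData) (i : Bool) :
    ∀ t j : ℕ, t ≤ D.e - 1 → 1 ≤ j → j ≤ D.e - t →
    ∃ N : ℤ, D.lam i (!i) t j =
      (∏ l ∈ Finset.range t, ((D.m i (!i) l : ℚ))) * D.lam0 (!i) (t + j) + (N : ℚ) := by
  intro t
  induction t with
  | zero =>
    intro j _ _ _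
    exact ⟨0, by simp [D.base]⟩
  | succ t ih =>
    intro j ht hj1 hj
    have he := D.he
    have ht' : t ≤ D.e - 1 := by omega
    have hj' : j + 1 ≤ D.e - t := by omega
    obtain ⟨N'', hN⟩ := ih (j + 1) ht' (by omega) hj'
    have hidx : t + (j + 1) = t + 1 + j := by omega
    rw [hidx] at hN
    have hrec := D.rec_other i t j ht hj1 hj
    have hlead := D.lead i (!i) t ht'
    have hm : (D.m i (!i) t : ℚ) ≠ 0 := by
      have := D.m_pos i (!i) t ht'
      exact_mod_cast Nat.pos_iff_ne_zero.mp this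
    have hmn : (D.m i (!i) t : ℚ) * D.lam i (!i) t 1 = (D.n i (!i) t : ℚ) := by
      rw [hlead]; field_simp
    refine ⟨(D.m i (!i) t : ℤ) * N'' +
      ((Nat.lcm (D.m i false t) (D.m i true t) : ℤ) - 1) * D.n i (!i) t, ?_⟩
    rw [hrec, hN, Finset.prod_range_succ]
    push_cast
    linear_combination ((Nat.lcm (D.m i false t) (D.m i true t) : ℚ) - 1) * hmn

/-- `λ_{ĩ,k} · ∏_{l=0}^{k−1} m_ĩ^{(l)}(i)` is an integer relatively prime to
`m_ĩ^{(k−1)}(i)`; i.e. `λ_{ĩ,k}` may be written as a fraction with denominator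
`m_ĩ · m'_ĩ(i) ⋯ m_ĩ^{(k−1)}(i)` and numerator relatively prime to `m_ĩ^{(k−1)}(i)`. -/
theorem denominator_interpretation (D : QOData) (i : Bool) (k : ℕ)
    (hk1 : 1 ≤ k) (hke : k ≤ D.e) :
    ∃ N : ℤ,
      D.lam0 (!i) k * ∏ l ∈ Finset.range k, ((D.m i (!i) l : ℚ)) = (N : ℚ) ∧
      Int.gcd N ((D.m i (!i) (k - 1) : ℤ)) = 1 := by
  have he := D.he
  obtain ⟨k', rfl⟩ : ∃ k', k = k' + 1 := ⟨k - 1, by omega⟩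
  have ht : k' ≤ D.e - 1 := by omega
  obtain ⟨N', hN⟩ := D.key i k' 1 ht le_rfl (by omega)
  have hlead := D.lead i (!i) k' ht
  have hmpos := D.m_pos i (!i) k' ht
  have hm : (D.m i (!i) k' : ℚ) ≠ 0 := by
    exact_mod_cast Nat.pos_iff_ne_zero.mp hmpos
  have hmn : (D.m i (!i) k' : ℚ) * D.lam i (!i) k' 1 = (D.n i (!i) k' : ℚ) := by
    rw [hlead]; field_simp
  refine ⟨D.n i (!i) k' - (D.m i (!i) k' : ℤ) * N', ?_, ?_⟩
  · rw [Finset.prod_range_succ]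
    push_cast
    linear_combination hmn - (D.m i (!i) k' : ℚ) * hN
  · have hcop : Int.gcd (D.n i (!i) k') ((D.m i (!i) k' : ℤ)) = 1 := D.cop i (!i) k' ht
    have h1 : IsCoprime (D.n i (!i) k') ((D.m i (!i) k' : ℤ)) :=
      Int.isCoprime_iff_gcd_eq_one.mpr hcop
    have h2 : IsCoprime (D.n i (!i) k' - (D.m i (!i) k' : ℤ) * N')
        ((D.m i (!i) k' : ℤ)) := by
      have := h1.add_mul_right_left (-N')
      simpa [mul_comm, sub_eq_add_neg, neg_mul, mul_neg] using this
    simpa using Int.isCoprime_iff_gcd_eq_one.mp h2
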